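/- For every positive integer m, the coefficient of the monomial x_1^{2m-2} x_2^{2m-2} ⋯ x_m^{2m-2} in the integer polynomial ∏_{1 ≤ i < j ≤ m} (x_i - x_j)^4 equals (2m)! / 2^m. -/

import Mathlib

set_option maxHeartbeats 1000000

open Finset MvPolynomial

namespace DysonAux

variable {n : ℕ}

/-- `Rp k = ∏_{j ≠ k} (X j - X k)`. -/
noncomputable def Rp (k : Fin n) : MvPolynomial (Fin n) ℤ :=
  ∏ j ∈ univ.erase k, (X j - X k)

/-- `Q a = ∏_k Rp k ^ (a k)`, the Dyson product with denominators cleared. -/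
noncomputable def Q (a : Fin n → ℕ) : MvPolynomial (Fin n) ℤ := ∏ k, Rp k ^ a k

/-- The target exponent vector: `D a j = (∑ a) - a j`. -/
noncomputable def D (a : Fin n → ℕ) : Fin n →₀ ℕ :=
  Finsupp.equivFunOnFinite.symm (fun j => (∑ i, a i) - a j)

@[simp] theorem D_apply (a : Fin n → ℕ) (j : Fin n) : D a j = (∑ i, a i) - a j := rfl

theorem key_rat (hn : 0 < n) (y : Fin n → ℚ) :
    ∑ i, (∏ j ∈ univ.erase i, y j) * ∏ k ∈ univ.erase i, (∏ j ∈ univ.erase k, (y j - y k)) =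
      ∏ k, ∏ j ∈ univ.erase k, (y j - y k) := by
  by_cases hinj : Function.Injective y
  · have : Nonempty (Fin n) := Fin.pos_iff_nonempty.mp hn
    have hb := Lagrange.sum_basis (s := (univ : Finset (Fin n))) (v := y)
      (Function.Injective.injOn hinj) univ_nonempty
    have hev := congrArg (Polynomial.eval 0) hb
    simp only [Polynomial.eval_finset_sum, Lagrange.basis, Polynomial.eval_prod,
      Lagrange.basisDivisor, Polynomial.eval_mul, Polynomial.eval_C, Polynomial.eval_sub,
      Polynomial.eval_X, Polynomial.eval_one, zero_sub] at hev
    set r : Fin n → ℚ := fun k => ∏ j ∈ univ.erase k, (y j - y k) with hr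
    have hrne : ∀ k, r k ≠ 0 := by
      intro k
      refine Finset.prod_ne_zero_iff.mpr (fun j hj => ?_)
      have := (Finset.mem_erase.mp hj).1
      exact sub_ne_zero_of_ne (fun h => this (hinj h))
    have hev' : ∑ i, (∏ j ∈ univ.erase i, y j) * (r i)⁻¹ = 1 := by
      rw [← hev]
      refine Finset.sum_congr rfl (fun i _ => ?_)
      rw [hr, ← Finset.prod_inv_distrib, ← Finset.prod_mul_distrib]
      refine Finset.prod_congr rfl (fun j hj => ?_)
      have hne : j ≠ i := (Finset.mem_erase.mp hj).1
      have h1 : y j - y i ≠ 0 := sub_ne_zero_of_ne (fun h => hne (hinj h))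
      have h2 : y i - y j ≠ 0 := sub_ne_zero_of_ne (fun h => hne (hinj h.symm))
      field_simp
      ring
    calc ∑ i, (∏ j ∈ univ.erase i, y j) * ∏ k ∈ univ.erase i, r k
        = ∑ i, ((∏ j ∈ univ.erase i, y j) * (r i)⁻¹) * ∏ k, r k := by
          refine Finset.sum_congr rfl (fun i _ => ?_)
          rw [← Finset.prod_erase_mul univ r (mem_univ i)]
          field_simp [hrne i]
      _ = ∏ k, r k := by rw [← Finset.sum_mul, hev', one_mul]
  · rw [Function.not_injective_iff] at hinj
    obtain ⟨p, q, hy, hpq⟩ := hinj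
    have hrq : (∏ j ∈ univ.erase q, (y j - y q)) = 0 :=
      Finset.prod_eq_zero (Finset.mem_erase.mpr ⟨hpq, mem_univ p⟩) (by rw [hy, sub_self])
    have hrp : (∏ j ∈ univ.erase p, (y j - y p)) = 0 :=
      Finset.prod_eq_zero (Finset.mem_erase.mpr ⟨hpq.symm, mem_univ q⟩) (by rw [hy, sub_self])
    rw [Finset.prod_eq_zero (mem_univ q) hrq]
    refine Finset.sum_eq_zero (fun i _ => ?_)
    rcases eq_or_ne i q with rfl | hiq
    · rw [Finset.prod_eq_zero (f := fun k => ∏ j ∈ univ.erase k, (y j - y k))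
        (Finset.mem_erase.mpr ⟨hpq, mem_univ p⟩) hrp, mul_zero]
    · rw [Finset.prod_eq_zero (f := fun k => ∏ j ∈ univ.erase k, (y j - y k))
        (Finset.mem_erase.mpr ⟨Ne.symm hiq, mem_univ q⟩) hrq, mul_zero]

theorem key_poly (hn : 0 < n) :
    (∏ k, Rp k : MvPolynomial (Fin n) ℤ) =
      ∑ i, (∏ j ∈ univ.erase i, X j) * ∏ k ∈ univ.erase i, Rp k := by
  apply MvPolynomial.funext
  intro x
  have h := key_rat hn (fun i => (x i : ℚ))
  have h' : ∑ i, (∏ j ∈ univ.erase i, x j) *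
      ∏ k ∈ univ.erase i, (∏ j ∈ univ.erase k, (x j - x k)) =
      ∏ k, ∏ j ∈ univ.erase k, (x j - x k) := by exact_mod_cast h
  simp only [Rp, map_sum, map_prod, map_mul, eval_prod, eval_mul, eval_sub, eval_X]
  rw [h']

theorem key_Q (hn : 0 < n) (a : Fin n → ℕ) (ha : ∀ i, 1 ≤ a i) :
    Q a = ∑ i, (∏ j ∈ univ.erase i, X j) * Q (Function.update a i (a i - 1)) := by
  have hpow : ∀ k : Fin n, Rp k ^ a k = Rp k ^ (a k - 1) * Rp k := by
    intro k
    rw [← pow_succ]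
    congr 1
    have := ha k
    omega
  have h2 : ∀ i : Fin n, Q (Function.update a i (a i - 1)) =
      (∏ k, Rp k ^ (a k - 1)) * ∏ k ∈ univ.erase i, Rp k := by
    intro i
    rw [Q, ← Finset.mul_prod_erase univ _ (mem_univ i),
      ← Finset.mul_prod_erase univ (fun k => Rp k ^ (a k - 1)) (mem_univ i),
      Function.update_self, mul_assoc, ← Finset.prod_mul_distrib]
    congr 1
    refine Finset.prod_congr rfl (fun k hk => ?_)
    rw [Function.update_of_ne (Finset.mem_erase.mp hk).1, hpow k]
  calc Q a = (∏ k, Rp k ^ (a k - 1)) * ∏ k, Rp k := by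
        rw [Q, ← Finset.prod_mul_distrib]
        exact Finset.prod_congr rfl (fun k _ => hpow k)
    _ = ∑ i, (∏ j ∈ univ.erase i, X j) * Q (Function.update a i (a i - 1)) := by
        rw [key_poly hn, Finset.mul_sum]
        refine Finset.sum_congr rfl (fun i _ => ?_)
        rw [h2 i]
        ring

theorem prod_X_eq_monomial (s : Finset (Fin n)) :
    (∏ j ∈ s, X j : MvPolynomial (Fin n) ℤ) =
      monomial (∑ j ∈ s, Finsupp.single j 1) (1 : ℤ) := by
  induction s using Finset.induction_on with
  | empty => simp
  | insert x s hx ih =>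
    rw [Finset.prod_insert hx, Finset.sum_insert hx, ih, MvPolynomial.X,
      monomial_mul, one_mul]

theorem sum_update (a : Fin n → ℕ) (i : Fin n) (hai : 1 ≤ a i) :
    ∑ j, Function.update a i (a i - 1) j = (∑ j, a j) - 1 := by
  rw [Finset.sum_update_of_mem (mem_univ i)]
  have h1 : ∑ j, a j = a i + ∑ j ∈ univ \ {i}, a j :=
    Finset.sum_eq_add_sum_sdiff_singleton_of_mem (mem_univ i) a
  omega

theorem coeff_rec (hn : 0 < n) (a : Fin n → ℕ) (ha : ∀ i, 1 ≤ a i) :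
    MvPolynomial.coeff (D a) (Q a) =
      ∑ i, MvPolynomial.coeff (D (Function.update a i (a i - 1)))
        (Q (Function.update a i (a i - 1))) := by
  rw [key_Q hn a ha, MvPolynomial.coeff_sum]
  refine Finset.sum_congr rfl (fun i _ => ?_)
  have hD : D a = (∑ j ∈ univ.erase i, Finsupp.single j 1) +
      D (Function.update a i (a i - 1)) := by
    ext j
    rw [Finsupp.add_apply, D_apply, D_apply, sum_update a i (ha i)]
    have hw : (∑ j' ∈ univ.erase i, Finsupp.single j' (1:ℕ)) j
        = if j ∈ univ.erase i then 1 else 0 := by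
      rw [Finsupp.finset_sum_apply]
      simp_rw [Finsupp.single_apply]
      rw [Finset.sum_ite_eq' (univ.erase i) j (fun _ => 1)]
    rw [hw]
    have h1 : ∑ j', a j' = a i + ∑ j' ∈ univ \ {i}, a j' :=
      Finset.sum_eq_add_sum_sdiff_singleton_of_mem (mem_univ i) a
    rcases eq_or_ne j i with rfl | hji
    · simp only [Finset.mem_erase, ne_eq, not_true_eq_false, false_and, if_false,
        Function.update_self]
      have := ha j
      have h2 : a j ≤ ∑ j', a j' :=
        Finset.single_le_sum (fun k _ => Nat.zero_le (a k)) (mem_univ j)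
      omega
    · have hmem : j ∈ univ.erase i := Finset.mem_erase.mpr ⟨hji, mem_univ j⟩
      rw [if_pos hmem, Function.update_of_ne hji]
      have h2 : a j ≤ ∑ j' ∈ univ \ {i}, a j' := by
        refine Finset.single_le_sum (fun k _ => Nat.zero_le (a k)) ?_
        rw [Finset.mem_sdiff, Finset.mem_singleton]
        exact ⟨mem_univ j, hji⟩
      have := ha i
      omega
  rw [prod_X_eq_monomial, hD, MvPolynomial.coeff_monomial_mul, one_mul]

theorem erase_univ_succ {m : ℕ} (k : Fin m) :
    (univ.erase (Fin.succ k) : Finset (Fin (m + 1))) =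
      Finset.cons 0 ((univ.erase k).map ⟨Fin.succ, Fin.succ_injective _⟩) (by simp) := by
  ext j
  induction j using Fin.cases with
  | zero => simp [Fin.succ_ne_zero, (Fin.succ_ne_zero k).symm, Ne.symm]
  | succ j' =>
    simp only [Finset.mem_erase, mem_univ, and_true, Finset.mem_cons, Finset.mem_map,
      Function.Embedding.coeFn_mk, Fin.succ_inj]
    simp [Fin.succ_ne_zero, Ne, Fin.succ_inj]

theorem drop {m : ℕ} (a : Fin (m + 1) → ℕ) (h0 : a 0 = 0) :
    MvPolynomial.coeff (D a) (Q a) = MvPolynomial.coeff (D (Fin.tail a)) (Q (Fin.tail a)) := by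
  set S : ℕ := ∑ k, Fin.tail a k with hS
  have hStot : ∑ k, a k = S := by
    rw [Fin.sum_univ_succ, h0, zero_add]; rfl
  have hR : ∀ k : Fin m, Rp (Fin.succ k) =
      (X 0 - X k.succ) * rename Fin.succ (Rp k) := by
    intro k
    rw [Rp, erase_univ_succ, Finset.prod_cons, Finset.prod_map]
    congr 1
    rw [Rp, map_prod]
    exact Finset.prod_congr rfl fun j hj => by
      rw [map_sub, rename_X, rename_X]; rfl
  have hQ : Q a = (∏ k : Fin m, (X (0 : Fin (m+1)) - X k.succ) ^ (a k.succ)) *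
      rename Fin.succ (Q (Fin.tail a)) := by
    rw [Q, Fin.prod_univ_succ, h0, pow_zero, one_mul]
    simp_rw [hR, mul_pow, Finset.prod_mul_distrib]
    congr 1
    rw [Q, map_prod]
    exact Finset.prod_congr rfl fun k _ => by rw [map_pow]; rfl
  have hCrename : ∀ p : MvPolynomial (Fin m) ℤ,
      finSuccEquiv ℤ m (rename Fin.succ p) = Polynomial.C p := by
    intro p
    have h : ((finSuccEquiv ℤ m).toAlgHom.comp (rename (Fin.succ : Fin m → Fin (m+1))))
        = Polynomial.CAlgHom (R := ℤ) (A := MvPolynomial (Fin m) ℤ) := by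
      apply MvPolynomial.algHom_ext
      intro i
      simp [Polynomial.CAlgHom, MvPolynomial.finSuccEquiv_X_succ]
    exact AlgHom.congr_fun h p
  have hfse : finSuccEquiv ℤ m (Q a) =
      (∏ k : Fin m, (Polynomial.X - Polynomial.C (X k)) ^ (Fin.tail a k)) *
        Polynomial.C (Q (Fin.tail a)) := by
    rw [hQ, map_mul, map_prod, hCrename]
    congr 1
    refine Finset.prod_congr rfl fun k _ => ?_
    rw [map_pow, map_sub, MvPolynomial.finSuccEquiv_X_zero, MvPolynomial.finSuccEquiv_X_succ]
    rfl
  set A' : Polynomial (MvPolynomial (Fin m) ℤ) :=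
    ∏ k : Fin m, (Polynomial.X - Polynomial.C (X k)) ^ (Fin.tail a k) with hA'
  have hmonic : A'.Monic :=
    Polynomial.monic_prod_of_monic _ _ fun k _ => (Polynomial.monic_X_sub_C _).pow _
  have hdeg : A'.natDegree = S := by
    rw [hA', Polynomial.natDegree_prod_of_monic _ _
      (fun k _ => (Polynomial.monic_X_sub_C _).pow _)]
    simp [Polynomial.natDegree_pow, Polynomial.natDegree_X_sub_C]
    exact hS.symm
  have hcoeffS : (finSuccEquiv ℤ m (Q a)).coeff S = Q (Fin.tail a) := by
    rw [hfse, Polynomial.coeff_mul_C, ← hdeg, Polynomial.Monic.coeff_natDegree hmonic, one_mul]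
  have hDa : D a = Finsupp.cons S (D (Fin.tail a)) := by
    ext j
    induction j using Fin.cases with
    | zero => rw [D_apply, hStot, h0, Nat.sub_zero, Finsupp.cons_zero]
    | succ j' => rw [D_apply, hStot, Finsupp.cons_succ, D_apply, ← hS]; rfl
  rw [hDa, ← MvPolynomial.finSuccEquiv_coeff_coeff, hcoeffS]

theorem coeff_perm (a : Fin n → ℕ) (π : Equiv.Perm (Fin n)) :
    MvPolynomial.coeff (D a) (Q a) = MvPolynomial.coeff (D (a ∘ π)) (Q (a ∘ π)) := by
  have hRite : ∀ k : Fin n, Rp k = ∏ j, (if j = k then 1 else (X j - X k)) := by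
    intro k
    rw [Rp, ← Finset.prod_erase (univ)
      (f := fun j => if j = k then 1 else (X j - X k : MvPolynomial (Fin n) ℤ))
      (h := if_pos rfl)]
    exact Finset.prod_congr rfl fun j hj => by rw [if_neg (Finset.mem_erase.mp hj).1]
  have hren : rename (π : Fin n → Fin n) (Q (a ∘ π)) = Q a := by
    rw [Q, map_prod]
    have hterm : ∀ k : Fin n, rename (π : Fin n → Fin n) (Rp k ^ (a ∘ π) k)
        = (fun k' => Rp k' ^ a k') (π k) := by
      intro k
      rw [map_pow]
      congr 1
      rw [hRite, map_prod, hRite]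
      rw [← Equiv.prod_comp π
        (fun j' => if j' = π k then 1 else (X j' - X (π k) : MvPolynomial (Fin n) ℤ))]
      refine Finset.prod_congr rfl fun j _ => ?_
      rcases eq_or_ne j k with rfl | hjk
      · rw [if_pos rfl, if_pos rfl, map_one]
      · rw [if_neg hjk, if_neg (fun h => hjk (π.injective h)), map_sub, rename_X, rename_X]
    rw [Finset.prod_congr rfl (fun k _ => hterm k), Equiv.prod_comp π (fun k' => Rp k' ^ a k'), Q]
  have hD : D a = Finsupp.mapDomain (π : Fin n → Fin n) (D (a ∘ π)) := by
    ext j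
    have : j = π (π.symm j) := (Equiv.apply_symm_apply π j).symm
    rw [this, Finsupp.mapDomain_apply π.injective, D_apply, D_apply]
    simp only [Function.comp_apply]
    rw [Equiv.sum_comp π a]
  rw [← hren, hD, MvPolynomial.coeff_rename_mapDomain _ π.injective]

theorem multinomial_perm (a : Fin n → ℕ) (π : Equiv.Perm (Fin n)) :
    Nat.multinomial univ (a ∘ π) = Nat.multinomial univ a := by
  unfold Nat.multinomial
  simp only [Function.comp_apply]
  rw [Equiv.sum_comp π a, Equiv.prod_comp π (fun i => (a i).factorial)]

theorem multinomial_tail {m : ℕ} (a : Fin (m + 1) → ℕ) (h0 : a 0 = 0) :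
    Nat.multinomial univ a = Nat.multinomial univ (Fin.tail a) := by
  unfold Nat.multinomial
  rw [Fin.sum_univ_succ, Fin.prod_univ_succ, h0]
  simp [Fin.tail]

theorem multinomial_pascal (hn : 0 < n) (a : Fin n → ℕ) (ha : ∀ i, 1 ≤ a i) :
    Nat.multinomial univ a = ∑ i, Nat.multinomial univ (Function.update a i (a i - 1)) := by
  set S := ∑ i, a i with hSdef
  have hprodpos : 0 < ∏ j, (a j).factorial := Finset.prod_pos (fun j _ => Nat.factorial_pos _)
  refine Nat.eq_of_mul_eq_mul_left hprodpos ?_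
  have hsum : ∀ i : Fin n, ∑ j, Function.update a i (a i - 1) j = S - 1 := by
    intro i
    rw [Finset.sum_update_of_mem (mem_univ i)]
    have h1 : S = a i + ∑ j ∈ univ \ {i}, a j :=
      Finset.sum_eq_add_sum_sdiff_singleton_of_mem (mem_univ i) a
    have := ha i
    omega
  have key : ∀ i : Fin n, (∏ j, (a j).factorial) *
      Nat.multinomial univ (Function.update a i (a i - 1))
      = a i * (S - 1).factorial := by
    intro i
    have hupd : (fun j => (Function.update a i (a i - 1) j).factorial)
        = Function.update (fun j => (a j).factorial) i ((a i - 1).factorial) :=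
      funext fun j => Function.apply_update (fun _ k => k.factorial) a i _ j
    have hfac : (∏ j, (a j).factorial)
        = a i * ∏ j, (Function.update a i (a i - 1) j).factorial := by
      rw [hupd, Finset.prod_update_of_mem (mem_univ i),
        Finset.prod_eq_mul_prod_sdiff_singleton_of_mem (mem_univ i) (fun j => (a j).factorial),
        ← mul_assoc]
      congr 1
      have h1 : 0 < a i := ha i
      rw [← Nat.succ_pred_eq_of_pos h1, Nat.factorial_succ]
      simp
    rw [hfac, mul_assoc, Nat.multinomial_spec, hsum i]
  rw [Finset.mul_sum]
  simp_rw [key]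
  rw [← Finset.sum_mul, Nat.multinomial_spec]
  have hS : 1 ≤ S := by
    obtain ⟨i⟩ := Fin.pos_iff_nonempty.mp hn
    calc 1 ≤ a i := ha i
    _ ≤ S := Finset.single_le_sum (fun j _ => Nat.zero_le _) (mem_univ i)
  rw [← hSdef, ← Nat.succ_pred_eq_of_pos hS, Nat.factorial_succ]
  simp [Nat.succ_pred_eq_of_pos hS]

/-- Good's induction: the Dyson constant term is the multinomial coefficient. -/
theorem dyson_main : ∀ (N n : ℕ) (a : Fin n → ℕ), n + (∑ i, a i) ≤ N →
    MvPolynomial.coeff (D a) (Q a) = (Nat.multinomial univ a : ℤ) := by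
  intro N
  induction N with
  | zero =>
    intro n a h
    have hn0 : n = 0 := by omega
    subst hn0
    have hD0 : D a = 0 := Subsingleton.elim _ _
    have hQ1 : Q a = 1 := by rw [Q, Finset.univ_eq_empty, Finset.prod_empty]
    rw [hD0, hQ1, Finset.univ_eq_empty, Nat.multinomial_empty]
    simp
  | succ N ih =>
    intro n a h
    by_cases hS0 : ∑ i, a i = 0
    · have hai : ∀ i, a i = 0 := by
        intro i
        exact (Finset.sum_eq_zero_iff.mp hS0) i (mem_univ i)
      have hQ1 : Q a = 1 := by
        rw [Q]
        refine Finset.prod_eq_one (fun k _ => by rw [hai k, pow_zero])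
      have hD0 : D a = 0 := by
        ext j
        simp [hai]
      rw [hQ1, hD0]
      have : Nat.multinomial univ a = 1 := by
        unfold Nat.multinomial
        simp [hai]
      rw [this]
      simp
    · by_cases hall : ∀ i, 1 ≤ a i
      · have hn : 0 < n := by
          rcases Nat.eq_zero_or_pos n with h0 | h0
          · subst h0
            simp at hS0
          · exact h0
        rw [coeff_rec hn a hall, multinomial_pascal hn a hall]
        push_cast
        refine Finset.sum_congr rfl (fun i _ => ?_)
        refine ih n (Function.update a i (a i - 1)) ?_
        rw [sum_update a i (hall i)]
        omega
      · push_neg at hall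
        obtain ⟨i, hi⟩ := hall
        have hi0 : a i = 0 := by omega
        rcases n with _ | m
        · exact i.elim0
        · set π := Equiv.swap (0 : Fin (m+1)) i with hπ
          set b := a ∘ π with hb
          have hb0 : b 0 = 0 := by
            rw [hb]
            simp only [Function.comp_apply, hπ, Equiv.swap_apply_left]
            exact hi0
          have hsb : ∑ k, b k = ∑ k, a k := by
            rw [hb]
            simp only [Function.comp_apply]
            exact Equiv.sum_comp π a
          have hst : ∑ k, Fin.tail b k = ∑ k, a k := by
            have := Fin.sum_univ_succ b
            rw [hb0, zero_add] at this
            rw [← hsb, this]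
            rfl
          rw [coeff_perm a π, ← hb, drop b hb0,
            ih m (Fin.tail b) (by rw [hst]; omega),
            ← multinomial_tail b hb0, hb, multinomial_perm a π]

end DysonAux

/-- The coefficient of `∏ x_i^(2m-2)` in `∏_{i<j} (x_i - x_j)^4`
equals `(2m)!/2^m`. -/
theorem dyson_special_case (m : ℕ) (hm : 0 < m) :
    MvPolynomial.coeff
        (Finsupp.equivFunOnFinite.symm (fun _ : Fin m => 2 * m - 2))
        (∏ i : Fin m, ∏ j ∈ Finset.Ioi i,
          ((MvPolynomial.X i - MvPolynomial.X j) ^ 4 :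
            MvPolynomial (Fin m) ℤ)) =
      (((2 * m).factorial / 2 ^ m : ℕ) : ℤ) := by
  have hmain := DysonAux.dyson_main (m + 2 * m) m (fun _ => 2)
    (by rw [Finset.sum_const, Finset.card_univ, Fintype.card_fin, smul_eq_mul]; omega)
  have hprod : (∏ i : Fin m, ∏ j ∈ Finset.Ioi i,
      ((MvPolynomial.X i - MvPolynomial.X j) ^ 4 : MvPolynomial (Fin m) ℤ))
      = DysonAux.Q (fun _ : Fin m => 2) := by
    rw [DysonAux.Q]
    have h1 : ∀ i : Fin m, (DysonAux.Rp i : MvPolynomial (Fin m) ℤ) ^ 2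
        = ∏ j ∈ univ.erase i, (X j - X i) ^ 2 := by
      intro i
      rw [DysonAux.Rp, ← Finset.prod_pow]
    have h2 := Finset.prod_prod_Ioi_mul_eq_prod_prod_off_diag
      (fun j i => ((MvPolynomial.X j - MvPolynomial.X i) ^ 2 : MvPolynomial (Fin m) ℤ))
    calc (∏ i : Fin m, ∏ j ∈ Finset.Ioi i,
          ((MvPolynomial.X i - MvPolynomial.X j) ^ 4 : MvPolynomial (Fin m) ℤ))
        = ∏ i : Fin m, ∏ j ∈ Finset.Ioi i,
            (((X j - X i) ^ 2) * ((X i - X j) ^ 2) : MvPolynomial (Fin m) ℤ) := by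
          refine Finset.prod_congr rfl fun i _ => Finset.prod_congr rfl fun j _ => ?_
          ring
      _ = _ := h2
      _ = ∏ i : Fin m, (DysonAux.Rp i : MvPolynomial (Fin m) ℤ) ^ 2 := by
          refine Finset.prod_congr rfl fun i _ => ?_
          rw [h1 i]
          refine Finset.prod_congr ?_ fun j _ => rfl
          ext j
          simp
  have hD : (Finsupp.equivFunOnFinite.symm (fun _ : Fin m => 2 * m - 2))
      = DysonAux.D (fun _ : Fin m => 2) := by
    rw [DysonAux.D]
    congr 1
    funext j
    simp [Finset.sum_const, mul_comm]
  have hmult : Nat.multinomial univ (fun _ : Fin m => 2) = (2 * m).factorial / 2 ^ m := by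
    unfold Nat.multinomial
    simp [Finset.sum_const, Finset.prod_const, mul_comm, Nat.factorial]
  rw [hprod, hD, hmain, hmult]
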